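/- Let n ≥ 1 and let A be an n×n real matrix such that every eigenvalue μ ∈ ℂ of A (i.e., every element of the spectrum of the complexification of A) satisfies μ = 0 or Re(μ) < 0. Let z₀ ∈ ℝⁿ and suppose the trajectory t ↦ exp(tA)·z₀ is bounded on [0,∞). Then exp(tA)·z₀ converges to a (finite) limit in ℝⁿ as t → ∞. -/

import Mathlib

set_option maxHeartbeats 1600000

open Filter Nat

attribute [local instance] Matrix.linftyOpSemiNormedRing Matrix.linftyOpNormedRing
  Matrix.linftyOpNormedAlgebra

/-- A vector-valued polynomial that is bounded at infinity has vanishing higher coefficients. -/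
lemma aux_poly_bounded {E : Type*} [NormedAddCommGroup E] [NormedSpace ℝ E] (C : ℝ) :
    ∀ (m : ℕ) (c : ℕ → E),
    (∀ᶠ t : ℝ in atTop, ‖∑ k ∈ Finset.range m, t ^ k • c k‖ ≤ C) →
    ∀ k, 1 ≤ k → k < m → c k = 0 := by
  intro m
  induction m with
  | zero => intro c _ k _ hk; omega
  | succ m ih =>
    intro c hb k hk1 hkm
    rcases Nat.eq_zero_or_pos m with hm | hm
    · omega
    have hcm : c m = 0 := by
      set f : ℝ → E := fun t => ∑ j ∈ Finset.range (m + 1), t ^ j • c j with hf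
      have key : ∀ᶠ t : ℝ in atTop, (t ^ m)⁻¹ • f t
          = ∑ j ∈ Finset.range (m + 1), ((t ^ m)⁻¹ * t ^ j) • c j := by
        filter_upwards [eventually_gt_atTop (0 : ℝ)] with t ht
        rw [hf, Finset.smul_sum]
        exact Finset.sum_congr rfl fun j _ => smul_smul _ _ _
      have h1 : Tendsto (fun t : ℝ => (t ^ m)⁻¹ • f t) atTop
          (nhds (∑ j ∈ Finset.range (m + 1), if j = m then c m else 0)) := by
        apply Tendsto.congr' (EventuallyEq.symm key)
        apply tendsto_finset_sum
        intro j hjmem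
        rcases eq_or_lt_of_le (Nat.lt_succ_iff.mp (Finset.mem_range.mp hjmem)) with hjm' | hjm'
        · have hev : ∀ᶠ t : ℝ in atTop, (c m : E) = ((t ^ m)⁻¹ * t ^ j) • c j := by
            filter_upwards [eventually_gt_atTop (0 : ℝ)] with t ht
            rw [hjm', inv_mul_cancel₀ (pow_ne_zero _ ht.ne'), one_smul]
          rw [if_pos hjm', hjm']
          exact Tendsto.congr' (by filter_upwards [hev] with t h using hjm' ▸ h) tendsto_const_nhds
        · rw [if_neg (by omega)]
          have h2 : Tendsto (fun t : ℝ => (t⁻¹) ^ (m - j)) atTop (nhds 0) := by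
            have h2' : Tendsto (fun t : ℝ => (t⁻¹) ^ (m - j)) atTop
                (nhds ((0:ℝ) ^ (m - j))) := Filter.Tendsto.pow tendsto_inv_atTop_zero (m - j)
            rwa [zero_pow (by omega : m - j ≠ 0)] at h2'
          have h3 : ∀ᶠ t : ℝ in atTop, (t⁻¹) ^ (m - j) = (t ^ m)⁻¹ * t ^ j := by
            filter_upwards [eventually_gt_atTop (0 : ℝ)] with t ht
            rw [inv_pow, eq_comm, inv_mul_eq_iff_eq_mul₀ (pow_ne_zero _ ht.ne'),
              ← pow_sub₀ t ht.ne' (by omega : m - j ≤ m)]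
            congr 1; omega
          have h4 := (h2.congr' h3).smul_const (c j)
          rwa [zero_smul] at h4
      have h0 : Tendsto (fun t : ℝ => (t ^ m)⁻¹ • f t) atTop (nhds 0) := by
        have hto : Tendsto (fun t : ℝ => C * (t ^ m)⁻¹) atTop (nhds 0) := by
          have : Tendsto (fun t : ℝ => (t ^ m)⁻¹) atTop (nhds 0) :=
            (tendsto_pow_atTop (by omega : m ≠ 0)).inv_tendsto_atTop
          simpa using this.const_mul C
        apply squeeze_zero_norm' _ hto
        filter_upwards [hb, eventually_ge_atTop (1 : ℝ)] with t htb ht1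
        have htm : (0:ℝ) < t ^ m := pow_pos (by linarith) m
        rw [norm_smul, norm_inv, Real.norm_of_nonneg htm.le]
        rw [mul_comm]
        have hnn : (0:ℝ) ≤ (t ^ m)⁻¹ := by positivity
        exact mul_le_mul_of_nonneg_right htb hnn
      have heq := tendsto_nhds_unique h1 h0
      rwa [Finset.sum_ite_eq' _ m, if_pos (Finset.self_mem_range_succ m)] at heq
    rcases Nat.lt_succ_iff_lt_or_eq.mp hkm with h | h
    · apply ih c _ k hk1 h
      filter_upwards [hb] with t ht
      rwa [Finset.sum_range_succ, hcm, smul_zero, add_zero] at ht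
    · rw [h]; exact hcm

/-- Action of the matrix exponential on a generalized eigenvector. -/
lemma aux_mulVec_exp {n : ℕ} (B : Matrix (Fin n) (Fin n) ℂ) (μ : ℂ) (v : Fin n → ℂ)
    (k : ℕ) (hv : ((B - μ • 1) ^ k).mulVec v = 0) (t : ℝ) :
    (NormedSpace.exp (t • B)).mulVec v
      = Complex.exp (t • μ) • ∑ j ∈ Finset.range k,
          ((t : ℂ) ^ j * (j ! : ℂ)⁻¹) • ((B - μ • 1) ^ j).mulVec v := by
  set N : Matrix (Fin n) (Fin n) ℂ := B - μ • 1 with hN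
  let L : Matrix (Fin n) (Fin n) ℂ →ₗ[ℂ] (Fin n → ℂ) :=
    { toFun := fun M => M.mulVec v
      map_add' := fun M M' => Matrix.add_mulVec M M' v
      map_smul' := fun c M => Matrix.smul_mulVec c M v }
  let Lc : Matrix (Fin n) (Fin n) ℂ →L[ℂ] (Fin n → ℂ) :=
    { toLinearMap := L, cont := L.continuous_of_finiteDimensional }
  have hLc : ∀ M : Matrix (Fin n) (Fin n) ℂ, Lc M = M.mulVec v := fun _ => rfl
  have hdec : t • B = t • N + ((t : ℂ) * μ) • 1 := by
    rw [hN, smul_sub, sub_add_eq_add_sub, ← Complex.real_smul, ← smul_assoc]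
    simp
  have hcomm : Commute (t • N) (((t : ℂ) * μ) • (1 : Matrix (Fin n) (Fin n) ℂ)) :=
    (Commute.one_right (t • N)).smul_right _
  have hexp1 : NormedSpace.exp (((t : ℂ) * μ) • (1 : Matrix (Fin n) (Fin n) ℂ))
      = Complex.exp ((t : ℂ) * μ) • 1 := by
    rw [← Algebra.algebraMap_eq_smul_one]
    refine (NormedSpace.algebraMap_exp_comm (𝔸 := Matrix (Fin n) (Fin n) ℂ) _).symm.trans ?_
    rw [← Complex.exp_eq_exp_ℂ, Algebra.algebraMap_eq_smul_one]
  have hsplit : NormedSpace.exp (t • B)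
      = Complex.exp ((t : ℂ) * μ) • NormedSpace.exp (t • N) := by
    rw [hdec, Matrix.exp_add_of_commute _ _ hcomm, hexp1, mul_smul_comm, mul_one]
  have hsum : Summable fun j : ℕ => ((j ! : ℂ)⁻¹) • (t • N) ^ j :=
    NormedSpace.expSeries_summable' (𝕂 := ℂ) (t • N)
  have hexpand : (NormedSpace.exp (t • N)).mulVec v
      = ∑' j : ℕ, ((j ! : ℂ)⁻¹) • ((t • N) ^ j).mulVec v := by
    rw [← hLc, NormedSpace.exp_eq_tsum ℂ, Lc.map_tsum hsum]
    simp only [map_smul, hLc]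
    exact tsum_congr fun j => Matrix.smul_mulVec _ _ _
  have hterm : ∀ j : ℕ, ((j ! : ℂ)⁻¹) • ((t • N) ^ j).mulVec v
      = ((t : ℂ) ^ j * (j ! : ℂ)⁻¹) • (N ^ j).mulVec v := by
    intro j
    rw [smul_pow, Matrix.smul_mulVec,
      ← algebraMap_smul ℂ ((t : ℝ) ^ j) ((N ^ j).mulVec v), smul_smul]
    congr 1
    rw [Complex.coe_algebraMap]
    push_cast
    ring
  have hvanish : ∀ j : ℕ, j ∉ Finset.range k →
      ((t:ℂ) ^ j * (j ! : ℂ)⁻¹) • (N ^ j).mulVec v = 0 := by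
    intro j hj
    have hjk : k ≤ j := le_of_not_gt fun h => hj (Finset.mem_range.mpr h)
    have : N ^ j = N ^ (j - k) * N ^ k := by rw [← pow_add]; congr 1; omega
    rw [this, ← Matrix.mulVec_mulVec, hv, Matrix.mulVec_zero, smul_zero]
  have htsum : (NormedSpace.exp (t • N)).mulVec v
      = ∑ j ∈ Finset.range k, ((t : ℂ) ^ j * (j ! : ℂ)⁻¹) • (N ^ j).mulVec v := by
    rw [hexpand, tsum_congr hterm]
    exact tsum_eq_sum hvanish
  rw [hsplit, Matrix.smul_mulVec, htsum, Complex.real_smul]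

/-- single-term exponential decay -/
lemma aux_term_decay {E : Type*} [NormedAddCommGroup E] [NormedSpace ℂ E]
    (μ : ℂ) (hμ : μ.re < 0) (j : ℕ) (a : ℂ) (w : E) :
    Tendsto (fun t : ℝ => (Complex.exp (t • μ) * ((t : ℂ) ^ j * a)) • w) atTop (nhds 0) := by
  have hb : (0:ℝ) < -μ.re := by linarith
  have hcomp : Tendsto (fun t : ℝ => -μ.re * t) atTop atTop :=
    Tendsto.const_mul_atTop hb tendsto_id
  have h0 : Tendsto (fun t : ℝ => (-μ.re * t) ^ j * Real.exp (-(-μ.re * t))) atTop (nhds 0) :=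
    (Real.tendsto_pow_mul_exp_neg_atTop_nhds_zero j).comp hcomp
  have h1 : Tendsto (fun t : ℝ => t ^ j * Real.exp (t * μ.re)) atTop (nhds 0) := by
    have h2 := h0.const_mul (((-μ.re)⁻¹) ^ j)
    rw [mul_zero] at h2
    apply h2.congr
    intro t
    rw [mul_pow]
    have : -(-μ.re * t) = t * μ.re := by ring
    rw [this]
    field_simp
    rw [← mul_pow, neg_mul_neg, one_div, inv_mul_cancel₀ hμ.ne, one_pow, one_mul]
  have h3 : Tendsto (fun t : ℝ => (‖a‖ * ‖w‖) * (t ^ j * Real.exp (t * μ.re))) atTop (nhds 0) := by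
    simpa using h1.const_mul (‖a‖ * ‖w‖)
  apply squeeze_zero_norm' _ h3
  filter_upwards [eventually_ge_atTop (0 : ℝ)] with t ht
  have hnorm : ‖(Complex.exp (t • μ) * ((t : ℂ) ^ j * a)) • w‖
      = Real.exp (t * μ.re) * (|t| ^ j * ‖a‖) * ‖w‖ := by
    rw [norm_smul, norm_mul, norm_mul, norm_pow, Complex.norm_exp,
      Complex.real_smul, Complex.re_ofReal_mul, Complex.norm_real,
      Real.norm_eq_abs]
  rw [hnorm, abs_of_nonneg ht]
  exact le_of_eq (by ring)

theorem bounded_linear_trajectory_converges (n : ℕ) (hn : 1 ≤ n)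
    (A : Matrix (Fin n) (Fin n) ℝ)
    (hspec : ∀ μ ∈ spectrum ℂ (A.map (algebraMap ℝ ℂ)), μ = 0 ∨ μ.re < 0)
    (z0 : Fin n → ℝ)
    (hbdd : ∃ C : ℝ, ∀ t ≥ (0 : ℝ),
      ‖(NormedSpace.exp (t • A)).mulVec z0‖ ≤ C) :
    ∃ L : Fin n → ℝ,
      Tendsto (fun t : ℝ => (NormedSpace.exp (t • A)).mulVec z0) atTop (nhds L) := by
  classical
  set B : Matrix (Fin n) (Fin n) ℂ := A.map (algebraMap ℝ ℂ) with hB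
  set z0c : Fin n → ℂ := fun i => (z0 i : ℂ) with hz0c
  -- Step 1 : complexification of the trajectory
  have hmap : ∀ t : ℝ, (fun i => (((NormedSpace.exp (t • A)).mulVec z0) i : ℂ))
      = (NormedSpace.exp (t • B)).mulVec z0c := by
    intro t
    have hcont : Continuous ((algebraMap ℝ ℂ).mapMatrix :
        Matrix (Fin n) (Fin n) ℝ →+* Matrix (Fin n) (Fin n) ℂ) := by
      apply Continuous.matrix_map continuous_id Complex.continuous_ofReal
    have h1 := NormedSpace.map_exp
      ((algebraMap ℝ ℂ).mapMatrix : Matrix (Fin n) (Fin n) ℝ →+* Matrix (Fin n) (Fin n) ℂ)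
      hcont (t • A)
    have h2 : ((algebraMap ℝ ℂ).mapMatrix : Matrix (Fin n) (Fin n) ℝ →+* _) (t • A)
        = t • B := by
      ext i j
      simp [RingHom.mapMatrix_apply, Matrix.map_apply, hB, Complex.real_smul]
    have h3 : ((NormedSpace.exp (t • A)).map (algebraMap ℝ ℂ)) = NormedSpace.exp (t • B) := by
      have : ((algebraMap ℝ ℂ).mapMatrix : Matrix (Fin n) (Fin n) ℝ →+* _)
          (NormedSpace.exp (t • A)) = NormedSpace.exp (t • B) := h1.trans (by rw [h2]; exact rfl)
      exact this
    rw [← h3]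
    ext i
    simp only [Matrix.mulVec, dotProduct, Matrix.map_apply]
    push_cast
    rfl
  -- Step 2 : every vector has "polynomial plus decaying" trajectory
  have hP : ∀ v : Fin n → ℂ, ∃ (m : ℕ) (c : ℕ → Fin n → ℂ), (∀ k, m ≤ k → c k = 0) ∧
      Tendsto (fun t : ℝ => (NormedSpace.exp (t • B)).mulVec v
        - ∑ k ∈ Finset.range m, t ^ k • c k) atTop (nhds 0) := by
    have hzero : ∃ (m : ℕ) (c : ℕ → Fin n → ℂ), (∀ k, m ≤ k → c k = 0) ∧
        Tendsto (fun t : ℝ => (NormedSpace.exp (t • B)).mulVec 0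
          - ∑ k ∈ Finset.range m, t ^ k • c k) atTop (nhds 0) := by
      refine ⟨0, 0, fun _ _ => rfl, ?_⟩
      simpa [Matrix.mulVec_zero] using tendsto_const_nhds
    intro v
    have hv : v ∈ ⨆ μ : ℂ, Module.End.maxGenEigenspace
        (Matrix.toLinAlgEquiv' B : Module.End ℂ (Fin n → ℂ)) μ := by
      rw [Module.End.iSup_maxGenEigenspace_eq_top]; trivial
    refine Submodule.iSup_induction (motive := fun u : Fin n → ℂ =>
        ∃ (m : ℕ) (c : ℕ → Fin n → ℂ), (∀ k, m ≤ k → c k = 0) ∧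
        Tendsto (fun t : ℝ => (NormedSpace.exp (t • B)).mulVec u
          - ∑ k ∈ Finset.range m, t ^ k • c k) atTop (nhds 0))
      _ hv ?_ hzero ?_
    · -- generalized eigenvectors
      intro μ v hvμ
      by_cases hv0 : v = 0
      · rw [hv0]; exact hzero
      obtain ⟨k, hk⟩ := (Module.End.mem_maxGenEigenspace _ _ _).mp hvμ
      have hmat : ((B - μ • 1) ^ k).mulVec v = 0 := by
        have hEq : ((Matrix.toLinAlgEquiv' B - μ • 1) ^ k)
            = Matrix.toLinAlgEquiv' ((B - μ • 1) ^ k) := by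
          rw [map_pow, map_sub, map_smul, map_one]
        rw [hEq] at hk
        rwa [Matrix.toLinAlgEquiv'_apply] at hk
      have hkpos : k ≠ 0 := by
        intro h
        rw [h, pow_zero, Matrix.one_mulVec] at hmat
        exact hv0 hmat
      have hμmem : μ ∈ spectrum ℂ B := by
        have hgen : Module.End.HasGenEigenvalue
            (Matrix.toLinAlgEquiv' B : Module.End ℂ (Fin n → ℂ)) μ k := by
          rw [Module.End.hasGenEigenvalue_iff]
          intro hbot
          apply hv0
          have : v ∈ Module.End.genEigenspace
              (Matrix.toLinAlgEquiv' B : Module.End ℂ (Fin n → ℂ)) μ k := by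
            rw [Module.End.mem_genEigenspace_nat]
            have hEq : ((Matrix.toLinAlgEquiv' B - μ • 1) ^ k)
                = Matrix.toLinAlgEquiv' ((B - μ • 1) ^ k) := by
              rw [map_pow, map_sub, map_smul, map_one]
            rw [hEq, LinearMap.mem_ker, Matrix.toLinAlgEquiv'_apply]
            exact hmat
          rw [hbot] at this
          simpa using this
        have := (Module.End.hasEigenvalue_of_hasGenEigenvalue hgen).mem_spectrum
        rwa [AlgEquiv.spectrum_eq (Matrix.toLinAlgEquiv' :
          Matrix (Fin n) (Fin n) ℂ ≃ₐ[ℂ] _) B] at this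
      rcases hspec μ hμmem with hμ0 | hμneg
      · -- μ = 0 : polynomial trajectory
        subst hμ0
        refine ⟨k, fun j => if j < k then ((j ! : ℂ)⁻¹) • ((B - (0:ℂ) • 1) ^ j).mulVec v else 0,
          fun j hj => by simp [Nat.not_lt.mpr hj], ?_⟩
        have heq : ∀ t : ℝ, (NormedSpace.exp (t • B)).mulVec v
            - ∑ j ∈ Finset.range k, t ^ j •
              (if j < k then ((j ! : ℂ)⁻¹) • ((B - (0:ℂ) • 1) ^ j).mulVec v else 0) = 0 := by
          intro t
          rw [aux_mulVec_exp B 0 v k hmat t]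
          rw [sub_eq_zero]
          rw [smul_zero, Complex.exp_zero, one_smul]
          refine Finset.sum_congr rfl fun j hj => ?_
          rw [if_pos (Finset.mem_range.mp hj)]
          rw [← algebraMap_smul ℂ ((t:ℝ) ^ j), smul_smul, Complex.coe_algebraMap]
          congr 1
          push_cast
          ring
        have h0 : (fun t : ℝ => (NormedSpace.exp (t • B)).mulVec v
            - ∑ j ∈ Finset.range k, t ^ j •
              (if j < k then ((j ! : ℂ)⁻¹) • ((B - (0:ℂ) • 1) ^ j).mulVec v else 0))
            = fun _ => 0 := funext heq
        rw [h0]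
        exact tendsto_const_nhds
      · -- Re μ < 0 : decaying trajectory
        refine ⟨0, 0, fun _ _ => rfl, ?_⟩
        simp only [Finset.range_zero, Finset.sum_empty, sub_zero]
        have heq : ∀ t : ℝ, (NormedSpace.exp (t • B)).mulVec v
            = ∑ j ∈ Finset.range k, (Complex.exp (t • μ) *
                ((t:ℂ) ^ j * (j ! : ℂ)⁻¹)) • ((B - μ • 1) ^ j).mulVec v := by
          intro t
          rw [aux_mulVec_exp B μ v k hmat t, Finset.smul_sum]
          exact Finset.sum_congr rfl fun j _ => smul_smul _ _ _
        rw [funext heq]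
        have : Tendsto (fun t : ℝ => ∑ j ∈ Finset.range k, (Complex.exp (t • μ) *
            ((t:ℂ) ^ j * (j ! : ℂ)⁻¹)) • ((B - μ • 1) ^ j).mulVec v) atTop
            (nhds (∑ j ∈ Finset.range k, (0 : Fin n → ℂ))) := by
          apply tendsto_finset_sum
          intro j _
          exact aux_term_decay μ hμneg j _ _
        simpa using this
    · -- additivity
      rintro x y ⟨m₁, c₁, hc₁, ht₁⟩ ⟨m₂, c₂, hc₂, ht₂⟩
      refine ⟨max m₁ m₂, c₁ + c₂, fun j hj => by
        simp [hc₁ j (le_trans (le_max_left _ _) hj), hc₂ j (le_trans (le_max_right _ _) hj)], ?_⟩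
      have hsum : ∀ (mi : ℕ) (ci : ℕ → Fin n → ℂ), (∀ j, mi ≤ j → ci j = 0) → mi ≤ max m₁ m₂ →
          ∀ t : ℝ, ∑ j ∈ Finset.range (max m₁ m₂), t ^ j • ci j
            = ∑ j ∈ Finset.range mi, t ^ j • ci j := by
        intro mi ci hci hle t
        rw [eq_comm]
        apply Finset.sum_subset (Finset.range_subset_range.mpr hle)
        intro j _ hj
        rw [hci j (by simpa using hj), smul_zero]
      have key : ∀ t : ℝ, (NormedSpace.exp (t • B)).mulVec (x + y)
          - ∑ j ∈ Finset.range (max m₁ m₂), t ^ j • (c₁ + c₂) j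
          = ((NormedSpace.exp (t • B)).mulVec x - ∑ j ∈ Finset.range m₁, t ^ j • c₁ j)
          + ((NormedSpace.exp (t • B)).mulVec y - ∑ j ∈ Finset.range m₂, t ^ j • c₂ j) := by
        intro t
        rw [Matrix.mulVec_add]
        have : ∑ j ∈ Finset.range (max m₁ m₂), t ^ j • (c₁ + c₂) j
            = ∑ j ∈ Finset.range m₁, t ^ j • c₁ j + ∑ j ∈ Finset.range m₂, t ^ j • c₂ j := by
          have e1 : ∀ j, t ^ j • (c₁ + c₂) j = t ^ j • c₁ j + t ^ j • c₂ j := by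
            intro j; rw [Pi.add_apply, smul_add]
          rw [Finset.sum_congr rfl fun j _ => e1 j, Finset.sum_add_distrib,
            hsum m₁ c₁ hc₁ (le_max_left _ _) t, hsum m₂ c₂ hc₂ (le_max_right _ _) t]
        rw [this]
        abel
      rw [funext key]
      simpa using ht₁.add ht₂
  -- Step 3 : assemble
  obtain ⟨C, hC⟩ := hbdd
  obtain ⟨m, c, hc0, hconv⟩ := hP z0c
  set S : ℝ → (Fin n → ℂ) := fun t => ∑ k ∈ Finset.range m, t ^ k • c k with hS
  have hnorm_eq : ∀ t : ℝ, ‖(NormedSpace.exp (t • B)).mulVec z0c‖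
      = ‖(NormedSpace.exp (t • A)).mulVec z0‖ := by
    intro t
    rw [← hmap t]
    rw [Pi.norm_def, Pi.norm_def]
    congr 1
    apply Finset.sup_congr rfl
    intro i _
    rw [Complex.nnnorm_real]
  have hSbdd : ∀ᶠ t : ℝ in atTop, ‖S t‖ ≤ C + 1 := by
    have h1 : ∀ᶠ t : ℝ in atTop,
        ‖(NormedSpace.exp (t • B)).mulVec z0c - S t‖ ≤ 1 := by
      have hn0 : Tendsto (fun t : ℝ => ‖(NormedSpace.exp (t • B)).mulVec z0c - S t‖)
          atTop (nhds 0) := by simpa using hconv.norm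
      exact hn0.eventually_le_const zero_lt_one
    filter_upwards [h1, eventually_ge_atTop (0 : ℝ)] with t ht1 ht0
    have : ‖S t‖ ≤ ‖(NormedSpace.exp (t • B)).mulVec z0c‖
        + ‖(NormedSpace.exp (t • B)).mulVec z0c - S t‖ := by
      have := norm_sub_norm_le ((NormedSpace.exp (t • B)).mulVec z0c) (S t)
      have h2 := norm_sub_le ((NormedSpace.exp (t • B)).mulVec z0c)
        ((NormedSpace.exp (t • B)).mulVec z0c - S t)
      calc ‖S t‖ = ‖(NormedSpace.exp (t • B)).mulVec z0c
            - ((NormedSpace.exp (t • B)).mulVec z0c - S t)‖ := by rw [sub_sub_cancel]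
        _ ≤ _ := norm_sub_le _ _
    refine this.trans ?_
    have hb := hC t ht0
    rw [← hnorm_eq t] at hb
    linarith
  have hczero : ∀ k, 1 ≤ k → c k = 0 := by
    intro k hk
    by_cases hkm : k < m
    · exact aux_poly_bounded (C + 1) m c hSbdd k hk hkm
    · exact hc0 k (by omega)
  have hSconst : ∀ t : ℝ, S t = c 0 := by
    intro t
    show ∑ k ∈ Finset.range m, t ^ k • c k = c 0
    rcases Nat.eq_zero_or_pos m with hm0 | hmpos
    · simp [hm0, hc0 0 (le_of_eq hm0)]
    · rw [Finset.sum_eq_single 0]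
      · rw [pow_zero, one_smul]
      · intro j _ hj
        rw [hczero j (by omega), smul_zero]
      · intro h
        exact absurd (Finset.mem_range.mpr hmpos) h
  have hlim : Tendsto (fun t : ℝ => (NormedSpace.exp (t • B)).mulVec z0c) atTop
      (nhds (c 0)) := by
    have : (fun t : ℝ => (NormedSpace.exp (t • B)).mulVec z0c)
        = fun t => ((NormedSpace.exp (t • B)).mulVec z0c - S t) + c 0 := by
      funext t
      rw [hSconst t]
      abel
    rw [this]
    simpa using hconv.add (tendsto_const_nhds (x := c 0) (f := atTop))
  refine ⟨fun i => (c 0 i).re, ?_⟩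
  have hre : (fun t : ℝ => (NormedSpace.exp (t • A)).mulVec z0)
      = (fun x : Fin n → ℂ => fun i => (x i).re)
        ∘ (fun t : ℝ => (NormedSpace.exp (t • B)).mulVec z0c) := by
    funext t
    have := hmap t
    funext i
    have hi : (((NormedSpace.exp (t • A)).mulVec z0) i : ℂ)
        = (NormedSpace.exp (t • B)).mulVec z0c i := congrFun this i
    simp [Function.comp, ← hi]
  rw [hre]
  have hcont : Continuous (fun x : Fin n → ℂ => fun i => (x i).re) :=
    continuous_pi fun i => Complex.continuous_re.comp (continuous_apply i)
  exact (hcont.tendsto (c 0)).comp hlim
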